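/- Let d ≥ 1, r ≥ 0 and K, δ, T > 0. Let F be a map from the space of bounded functions ψ : [−r,0] → ℝ^d (equipped with the norm sup_{θ∈[−r,0]} ‖ψ(θ)‖) to ℝ^d satisfying ‖F(ψ₁) − F(ψ₂)‖ ≤ K·sup_{θ∈[−r,0]} ‖ψ₁(θ) − ψ₂(θ)‖ for all ψ₁, ψ₂. Let x : [−r,T] → ℝ^d be continuous with x(t) = x(0) + ∫₀^t F(x_s) ds for all t ∈ [0,T]. Let Y : [−r,T] → ℝ^d be continuous, X̄ : [−r,T] → ℝ^d bounded measurable, and U : [0,T] → ℝ^d integrable, with Y(t) = Y(0) + ∫₀^t [F(X̄_s) + U(s)] ds for all t ∈ [0,T], and suppose sup_{s∈[0,T]} sup_{θ∈[−r,0]} ‖X̄(s+θ) − Y(s+θ)‖ ≤ 2δ. Set v₀ = sup_{μ∈[−r,0]} ‖Y(μ) − x(μ)‖ and ψ* = max_{t∈[0,T]} ‖∫₀^t U(s) ds‖. Then max_{t∈[0,T]} ‖Y(t) − x(t)‖ ≤ (v₀ + ψ* + 2KδT)·e^{KT}. -/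

import Mathlib

open Set MeasureTheory intervalIntegral

/-- The segment of `z` at time `s`: `θ ↦ z(s+θ)`, with `θ` clamped to the delay window
`[-r, 0]` (so that the segment represents an element of the space of bounded functions on
`[-r,0]`). -/
def seg {d : ℕ} (r : ℝ) (z : ℝ → Fin d → ℝ) (s : ℝ) : ℝ → Fin d → ℝ :=
  fun θ => z (s + max (min θ 0) (-r))

/-- Deterministic Grönwall estimate: if `x` solves the integral equation
`x(t) = x(0) + ∫₀^t F(x_s) ds` with `F` K-Lipschitz in the sup norm over `[−r,0]`, and
`Y(t) = Y(0) + ∫₀^t [F(X̄_s) + U(s)] ds` with the step path `X̄` within `2δ` of `Y`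
(uniformly along segments), then with `v₀` bounding the initial deviation `‖Y − x‖` on
`[−r,0]` and `ψ*` bounding `‖∫₀^t U‖` on `[0,T]`,
`max_{t∈[0,T]} ‖Y(t) − x(t)‖ ≤ (v₀ + ψ* + 2KδT) e^{KT}`. -/
theorem stmt_3 (d : ℕ) (hd : 1 ≤ d) (r K δ T : ℝ)
    (hr : 0 ≤ r) (hK : 0 < K) (hδ : 0 < δ) (hT : 0 < T)
    (F : (ℝ → Fin d → ℝ) → Fin d → ℝ)
    (hFlip : ∀ ψ₁ ψ₂ : ℝ → Fin d → ℝ,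
      (∃ B : ℝ, ∀ θ, ‖ψ₁ θ‖ ≤ B) → (∃ B : ℝ, ∀ θ, ‖ψ₂ θ‖ ≤ B) →
      ∀ C : ℝ, 0 ≤ C → (∀ θ ∈ Icc (-r) 0, ‖ψ₁ θ - ψ₂ θ‖ ≤ C) →
        ‖F ψ₁ - F ψ₂‖ ≤ K * C)
    (x : ℝ → Fin d → ℝ) (hxcont : ContinuousOn x (Icc (-r) T))
    (hxint : IntervalIntegrable (fun s => F (seg r x s)) volume 0 T)
    (hxeq : ∀ t ∈ Icc (0:ℝ) T, x t = x 0 + ∫ s in (0:ℝ)..t, F (seg r x s))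
    (Y : ℝ → Fin d → ℝ) (hYcont : ContinuousOn Y (Icc (-r) T))
    (Xbar : ℝ → Fin d → ℝ) (hXbarmeas : Measurable Xbar)
    (hXbarbdd : ∃ B : ℝ, ∀ t, ‖Xbar t‖ ≤ B)
    (U : ℝ → Fin d → ℝ) (hUint : IntervalIntegrable U volume 0 T)
    (hYint : IntervalIntegrable (fun s => F (seg r Xbar s) + U s) volume 0 T)
    (hYeq : ∀ t ∈ Icc (0:ℝ) T, Y t = Y 0 + ∫ s in (0:ℝ)..t, (F (seg r Xbar s) + U s))
    (hclose : ∀ s ∈ Icc (0:ℝ) T, ∀ θ ∈ Icc (-r) 0, ‖Xbar (s + θ) - Y (s + θ)‖ ≤ 2 * δ)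
    (v₀ ψstar : ℝ)
    (hv₀ : ∀ μ' ∈ Icc (-r) 0, ‖Y μ' - x μ'‖ ≤ v₀)
    (hψstar : ∀ t ∈ Icc (0:ℝ) T, ‖∫ s in (0:ℝ)..t, U s‖ ≤ ψstar) :
    ∀ t ∈ Icc (0:ℝ) T, ‖Y t - x t‖ ≤ (v₀ + ψstar + 2 * K * δ * T) * Real.exp (K * T) := by
  have h0T : (0:ℝ) ≤ T := hT.le
  have hr0 : -r ≤ (0:ℝ) := neg_nonpos.2 hr
  have hrT : -r ≤ T := hr0.trans h0T
  set a : ℝ := v₀ + ψstar + 2 * K * δ * T with ha_def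
  set nrm : ℝ → ℝ := fun u => ‖Y u - x u‖ with hnrm_def
  have hncont : ContinuousOn nrm (Icc (-r) T) := (hYcont.sub hxcont).norm
  -- the clamp
  set c : ℝ → ℝ := fun s => max (min s T) 0 with hc_def
  have hcmono : Monotone c := fun s1 s2 h => max_le_max (min_le_min h le_rfl) le_rfl
  have hc0 : ∀ s, 0 ≤ c s := fun s => le_max_right _ _
  have hcr : ∀ s, -r ≤ c s := fun s => hr0.trans (hc0 s)
  have hcT : ∀ s, c s ≤ T := fun s => max_le (min_le_right _ _) h0T
  have hceq : ∀ s ∈ Icc (0:ℝ) T, c s = s := by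
    intro s hs
    simp only [hc_def, min_eq_left hs.2, max_eq_left hs.1]
  -- the running sup
  set φ : ℝ → ℝ := fun s => sSup (nrm '' Icc (-r) (c s)) with hφ_def
  have hbdd : ∀ s : ℝ, BddAbove (nrm '' Icc (-r) (c s)) := fun s =>
    IsCompact.bddAbove_image isCompact_Icc (hncont.mono (Icc_subset_Icc le_rfl (hcT s)))
  have hne : ∀ s : ℝ, (nrm '' Icc (-r) (c s)).Nonempty := fun s =>
    (nonempty_Icc.2 (hcr s)).image _
  have hle : ∀ s u, u ∈ Icc (-r) (c s) → nrm u ≤ φ s := fun s u hu =>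
    le_csSup (hbdd s) (mem_image_of_mem _ hu)
  have hcsup : ∀ s C, (∀ u ∈ Icc (-r) (c s), nrm u ≤ C) → φ s ≤ C := by
    intro s C h
    refine csSup_le (hne s) ?_
    rintro _ ⟨u, hu, rfl⟩
    exact h u hu
  have hφ0 : ∀ s, 0 ≤ φ s := fun s =>
    (norm_nonneg _).trans (hle s (-r) ⟨le_rfl, hcr s⟩)
  have hφmono : Monotone φ := by
    intro s1 s2 h
    exact csSup_le_csSup (hbdd s2) (hne s1)
      (image_mono (Icc_subset_Icc le_rfl (hcmono h)))
  have hφint : ∀ u v : ℝ, IntervalIntegrable φ volume u v := fun u v =>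
    hφmono.intervalIntegrable
  -- the primitive
  set ψ : ℝ → ℝ := fun t => ∫ s in (0:ℝ)..t, φ s with hψ_def
  have hψmono : ∀ u v : ℝ, u ≤ v → ψ u ≤ ψ v := by
    intro u v huv
    have hadj := integral_add_adjacent_intervals (hφint 0 u) (hφint u v)
    have h2 : 0 ≤ ∫ s in u..v, φ s := integral_nonneg huv (fun s _ => hφ0 s)
    simp only [hψ_def]
    rw [← hadj]; linarith
  have hψ0 : ψ 0 = 0 := by simp [hψ_def]
  have hψnonneg : ∀ t, 0 ≤ t → 0 ≤ ψ t := by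
    intro t ht; rw [← hψ0]; exact hψmono 0 t ht
  -- basic nonnegativity of constants
  have hv₀0 : 0 ≤ v₀ := (norm_nonneg _).trans (hv₀ 0 ⟨hr0, le_rfl⟩)
  have hψs0 : 0 ≤ ψstar := by
    have := hψstar 0 ⟨le_rfl, h0T⟩
    simpa using this
  have ha0 : 0 ≤ a := by positivity
  -- segment clamp identity on [-r,0]
  have hclamp : ∀ θ ∈ Icc (-r) (0:ℝ), max (min θ 0) (-r) = θ := by
    intro θ hθ
    rw [min_eq_left hθ.2, max_eq_left hθ.1]
  -- bounds for segments of continuous functions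
  obtain ⟨BX, hBX⟩ := hXbarbdd
  obtain ⟨BY, hBY⟩ := isCompact_Icc.exists_bound_of_continuousOn hYcont
  obtain ⟨Bx, hBx⟩ := isCompact_Icc.exists_bound_of_continuousOn hxcont
  have hmemseg : ∀ s ∈ Icc (0:ℝ) T, ∀ θ : ℝ, s + max (min θ 0) (-r) ∈ Icc (-r) T := by
    intro s hs θ
    constructor
    · have : -r ≤ max (min θ 0) (-r) := le_max_right _ _
      linarith [hs.1]
    · have h1 : min θ 0 ≤ 0 := min_le_right _ _
      have : max (min θ 0) (-r) ≤ 0 := max_le h1 hr0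
      linarith [hs.2]
  -- main pointwise estimate on the drift difference
  have hGbound : ∀ s ∈ Icc (0:ℝ) T,
      ‖F (seg r Xbar s) - F (seg r x s)‖ ≤ 2 * K * δ + K * φ s := by
    intro s hs
    have h1 : ‖F (seg r Xbar s) - F (seg r Y s)‖ ≤ K * (2 * δ) := by
      refine hFlip _ _ ⟨BX, fun θ => hBX _⟩ ⟨BY, fun θ => hBY _ (hmemseg s hs θ)⟩
        (2 * δ) (by positivity) ?_
      intro θ hθ
      simp only [seg, hclamp θ hθ]
      exact hclose s hs θ hθ
    have h2 : ‖F (seg r Y s) - F (seg r x s)‖ ≤ K * φ s := by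
      refine hFlip _ _ ⟨BY, fun θ => hBY _ (hmemseg s hs θ)⟩
        ⟨Bx, fun θ => hBx _ (hmemseg s hs θ)⟩ (φ s) (hφ0 s) ?_
      intro θ hθ
      simp only [seg, hclamp θ hθ]
      refine hle s (s + θ) ⟨by linarith [hs.1, hθ.1], ?_⟩
      rw [hceq s hs]
      linarith [hθ.2]
    calc ‖F (seg r Xbar s) - F (seg r x s)‖
        = ‖(F (seg r Xbar s) - F (seg r Y s)) + (F (seg r Y s) - F (seg r x s))‖ := by
          congr 1; abel
      _ ≤ ‖F (seg r Xbar s) - F (seg r Y s)‖ + ‖F (seg r Y s) - F (seg r x s)‖ :=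
          norm_add_le _ _
      _ ≤ K * (2 * δ) + K * φ s := add_le_add h1 h2
      _ = 2 * K * δ + K * φ s := by ring
  -- main integral estimate
  have Emain : ∀ u ∈ Icc (0:ℝ) T, nrm u ≤ v₀ + ψstar + 2 * K * δ * u + K * ψ u := by
    intro u hu
    have hsub : uIcc (0:ℝ) u ⊆ uIcc (0:ℝ) T := by
      rw [uIcc_of_le hu.1, uIcc_of_le h0T]
      exact Icc_subset_Icc le_rfl hu.2
    have hYint' : IntervalIntegrable (fun s => F (seg r Xbar s) + U s) volume 0 u :=
      hYint.mono_set hsub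
    have hUint' : IntervalIntegrable U volume 0 u := hUint.mono_set hsub
    have hxint' : IntervalIntegrable (fun s => F (seg r x s)) volume 0 u :=
      hxint.mono_set hsub
    have hFX : IntervalIntegrable (fun s => F (seg r Xbar s)) volume 0 u := by
      have := hYint'.sub hUint'
      simpa using this
    have hG : IntervalIntegrable
        (fun s => F (seg r Xbar s) - F (seg r x s)) volume 0 u := hFX.sub hxint'
    have hid : Y u - x u = (Y 0 - x 0)
        + (∫ s in (0:ℝ)..u, (F (seg r Xbar s) - F (seg r x s)))
        + ∫ s in (0:ℝ)..u, U s := by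
      rw [integral_sub hFX hxint']
      have hYu := hYeq u hu
      have hxu := hxeq u hu
      rw [integral_add hFX hUint'] at hYu
      rw [hYu, hxu]
      abel
    have hnint : ∫ s in (0:ℝ)..u, ‖F (seg r Xbar s) - F (seg r x s)‖
        ≤ ∫ s in (0:ℝ)..u, (2 * K * δ + K * φ s) := by
      refine integral_mono_on hu.1 hG.norm
        (intervalIntegrable_const.add ((hφint 0 u).const_mul K)) ?_
      intro s hs
      exact hGbound s ⟨hs.1, hs.2.trans hu.2⟩
    have heval : ∫ s in (0:ℝ)..u, (2 * K * δ + K * φ s)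
        = 2 * K * δ * u + K * ψ u := by
      rw [integral_add intervalIntegrable_const ((hφint 0 u).const_mul K),
        intervalIntegral.integral_const, intervalIntegral.integral_const_mul]
      simp [hψ_def, smul_eq_mul]
      ring
    calc nrm u = ‖(Y 0 - x 0)
        + (∫ s in (0:ℝ)..u, (F (seg r Xbar s) - F (seg r x s)))
        + ∫ s in (0:ℝ)..u, U s‖ := by rw [hnrm_def]; simp only; rw [hid]
      _ ≤ ‖Y 0 - x 0‖ + ‖∫ s in (0:ℝ)..u, (F (seg r Xbar s) - F (seg r x s))‖
          + ‖∫ s in (0:ℝ)..u, U s‖ := norm_add₃_le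
      _ ≤ v₀ + (∫ s in (0:ℝ)..u, ‖F (seg r Xbar s) - F (seg r x s)‖) + ψstar := by
          refine add_le_add (add_le_add (hv₀ 0 ⟨hr0, le_rfl⟩) ?_) (hψstar u hu)
          exact norm_integral_le_integral_norm hu.1
      _ ≤ v₀ + (2 * K * δ * u + K * ψ u) + ψstar := by
          rw [← heval]; linarith [hnint]
      _ = v₀ + ψstar + 2 * K * δ * u + K * ψ u := by ring
  -- bound on φ
  have hφbound : ∀ t' ∈ Icc (0:ℝ) T, φ t' ≤ K * ψ t' + a := by
    intro t' ht'
    refine hcsup t' _ ?_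
    intro u hu
    rw [hceq t' ht'] at hu
    rcases le_or_gt u 0 with h | h
    · have := hv₀ u ⟨hu.1, h⟩
      have hψn := hψnonneg t' ht'.1
      simp only [ha_def]
      nlinarith [mul_nonneg hK.le hψn, hψs0, mul_nonneg (mul_nonneg (by positivity : (0:ℝ) ≤ 2 * K) hδ.le) h0T]
    · have huI : u ∈ Icc (0:ℝ) T := ⟨h.le, hu.2.trans ht'.2⟩
      have hE := Emain u huI
      have hψle : ψ u ≤ ψ t' := hψmono u t' hu.2
      have h2 : 2 * K * δ * u ≤ 2 * K * δ * T :=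
        mul_le_mul_of_nonneg_left huI.2 (by positivity)
      simp only [ha_def]
      nlinarith [mul_le_mul_of_nonneg_left hψle hK.le]
  -- continuity of ψ on [0,T]
  have hψcont : ContinuousOn ψ (Icc 0 T) := by
    have := continuousOn_primitive_interval' (μ := volume) (hφint 0 T)
      (left_mem_uIcc (a := (0:ℝ)) (b := T))
    rwa [uIcc_of_le h0T] at this
  -- liminf right slope condition
  have hslope : ∀ t' ∈ Ico (0:ℝ) T, ∀ ρ : ℝ, φ t' < ρ →
      ∃ᶠ z in nhdsWithin t' (Ioi t'), (z - t')⁻¹ * (ψ z - ψ t') < ρ := by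
    intro t' ht' ρ hρ
    refine Filter.Eventually.frequently ?_
    set ε : ℝ := (ρ - φ t') / 2 with hε_def
    have hε : 0 < ε := by simp only [hε_def]; linarith
    have hcw : ContinuousWithinAt nrm (Icc (-r) T) t' :=
      hncont t' ⟨hr0.trans ht'.1, ht'.2.le⟩
    rw [Metric.continuousWithinAt_iff] at hcw
    obtain ⟨δ', hδ', hδ'p⟩ := hcw ε hε
    have hnt' : nrm t' ≤ φ t' := by
      refine hle t' t' ⟨hr0.trans ht'.1, ?_⟩
      rw [hceq t' ⟨ht'.1, ht'.2.le⟩]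
    have hφz : ∀ z, t' < z → z < t' + δ' → φ z ≤ φ t' + ε := by
      intro z hz1 hz2
      refine hcsup z _ ?_
      intro u hu
      rcases le_or_gt u t' with h | h
      · have : nrm u ≤ φ t' := by
          refine hle t' u ⟨hu.1, ?_⟩
          rwa [hceq t' ⟨ht'.1, ht'.2.le⟩]
        linarith
      · have huT : u ≤ T := hu.2.trans (hcT z)
        have hucz : u ≤ c z := hu.2
        have hczz : c z ≤ max z 0 := max_le_max (min_le_left _ _) le_rfl
        have hz0 : (0:ℝ) ≤ z := ht'.1.trans hz1.le
        have huz : u ≤ z := hucz.trans (by rw [max_eq_left hz0] at hczz; exact hczz)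
        have hdist : dist u t' < δ' := by
          rw [Real.dist_eq, abs_of_pos (by linarith)]
          linarith
        have := hδ'p ⟨hu.1, huT⟩ hdist
        rw [Real.dist_eq] at this
        have habs := abs_lt.1 this
        linarith [habs.1, habs.2]
    have hmem : Ioo t' (t' + δ') ∈ nhdsWithin t' (Ioi t') :=
      Ioo_mem_nhdsGT_of_mem ⟨le_rfl, by linarith⟩
    filter_upwards [hmem] with z hz
    have hzt : t' < z := hz.1
    have hψdiff : ψ z - ψ t' = ∫ s in t'..z, φ s := by
      have hadj := integral_add_adjacent_intervals (hφint 0 t') (hφint t' z)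
      simp only [hψ_def]
      rw [← hadj]; ring
    have hIle : ∫ s in t'..z, φ s ≤ (z - t') * φ z := by
      have : ∫ s in t'..z, φ s ≤ ∫ s in t'..z, (fun _ => φ z) s :=
        integral_mono_on hzt.le (hφint t' z) intervalIntegrable_const
          (fun s hs => hφmono hs.2)
      rw [intervalIntegral.integral_const, smul_eq_mul] at this
      linarith
    have hq : (z - t')⁻¹ * (ψ z - ψ t') ≤ φ z := by
      rw [hψdiff]
      have hpos : 0 < z - t' := by linarith
      rw [inv_mul_le_iff₀ hpos]
      linarith [hIle]
    have : φ z ≤ φ t' + ε := hφz z hzt hz.2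
    have : φ z < ρ := by simp only [hε_def] at this; linarith
    linarith [hq]
  -- Grönwall
  have hgron := le_gronwallBound_of_liminf_deriv_right_le (f := ψ) (f' := φ)
    (δ := 0) (K := K) (ε := a) (a := 0) (b := T) hψcont hslope (by rw [hψ0])
    (fun t' ht' => by linarith [hφbound t' ⟨ht'.1, ht'.2.le⟩])
  intro t ht
  have hψt := hgron t ht
  rw [sub_zero, gronwallBound_of_K_ne_0 hK.ne'] at hψt
  have hφt := hφbound t ht
  have hnt : nrm t ≤ φ t := by
    refine hle t t ⟨hr0.trans ht.1, ?_⟩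
    rw [hceq t ht]
  have hexp : Real.exp (K * t) ≤ Real.exp (K * T) :=
    Real.exp_le_exp.2 (mul_le_mul_of_nonneg_left ht.2 hK.le)
  have hψt' : ψ t ≤ 0 * Real.exp (K * t) + a / K * (Real.exp (K * t) - 1) := hψt
  have hfin : K * ψ t + a ≤ a * Real.exp (K * t) := by
    have h1 : K * ψ t ≤ K * (0 * Real.exp (K * t) + a / K * (Real.exp (K * t) - 1)) :=
      mul_le_mul_of_nonneg_left hψt' hK.le
    have h2 : K * (0 * Real.exp (K * t) + a / K * (Real.exp (K * t) - 1))
        = a * Real.exp (K * t) - a := by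
      field_simp
      ring
    rw [h2] at h1
    linarith
  have : nrm t ≤ a * Real.exp (K * T) := by
    have := mul_le_mul_of_nonneg_left hexp ha0
    linarith
  simpa [hnrm_def, ha_def] using this
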